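/- The operator H_{φ,ψ}^α defined by H_{φ,ψ}^α f = Σ_n α_n ⟨f, ψ_n⟩ φ_n on its natural domain D(H_{φ,ψ}^α) = {f : Σ_n |α_n|^2 |⟨f, ψ_n⟩|^2 < ∞} is a closed operator. -/

import Mathlib

noncomputable section

open ContinuousLinearMap

local notation "⟪" x ", " y "⟫" => @inner ℂ _ _ x y

theorem operator_closed
    {H : Type*} [NormedAddCommGroup H] [InnerProductSpace ℂ H] [CompleteSpace H]
    (e : HilbertBasis ℕ ℂ H) (T : H ≃L[ℂ] H) (φ ψ : ℕ → H)
    (hφ : ∀ n, φ n = T (e n))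
    (hψ : ∀ n, ψ n = adjoint (T.symm : H →L[ℂ] H) (e n)) (α : ℕ → ℂ) :
    IsClosed {p : H × H | HasSum (fun n => (α n * ⟪ψ n, p.1⟫) • φ n) p.2} := by
  have key : {p : H × H | HasSum (fun n => (α n * ⟪ψ n, p.1⟫) • φ n) p.2}
      = ⋂ n, {p : H × H | ⟪e n, T.symm p.2⟫ = α n * ⟪ψ n, p.1⟫} := by
    ext p
    simp only [Set.mem_iInter, Set.mem_setOf_eq]
    constructor
    · intro h n
      have h2 : HasSum (fun m => (α m * ⟪ψ m, p.1⟫) • e m) (T.symm p.2) := by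
        have := h.mapL (T.symm : H →L[ℂ] H)
        simpa [hφ] using this
      have h3 := h2.mapL (innerSL ℂ (e n))
      simp only [innerSL_apply_apply, inner_smul_right] at h3
      have h4 : (fun m => α m * ⟪ψ m, p.1⟫ * ⟪e n, e m⟫)
          = fun m => if m = n then α n * ⟪ψ n, p.1⟫ else 0 := by
        funext m
        rw [orthonormal_iff_ite.mp e.orthonormal]
        by_cases hm : m = n
        · subst hm; simp
        · simp [hm, Ne.symm hm]
      rw [h4] at h3
      exact h3.unique (hasSum_ite_eq n _)
    · intro h
      have h2 : HasSum (fun m => (α m * ⟪ψ m, p.1⟫) • e m) (T.symm p.2) := by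
        have := e.hasSum_repr (T.symm p.2)
        simp_rw [HilbertBasis.repr_apply_apply, h] at this
        exact this
      have h3 := h2.mapL (T : H →L[ℂ] H)
      simpa [hφ] using h3
  rw [key]
  refine isClosed_iInter fun n => isClosed_eq ?_ ?_
  · exact Continuous.inner continuous_const (T.symm.continuous.comp continuous_snd)
  · exact continuous_const.mul (Continuous.inner continuous_const continuous_fst)
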